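/- Let σ, S = ℂ[σ], w : σ → ℤⁿ, w' : σ → ℕ, and hc' be as in the weighted-grading setup. Suppose J = (g_i)_{i ∈ Λ} is an ideal of S generated by a family of elements and J is homogeneous with respect to the ℤⁿ-grading, and set J' = (hc'(g_i))_{i ∈ Λ}. Then for every d ∈ ℤⁿ for which (S/J)_d is finite-dimensional, one has dim (S/J')_d ≥ dim (S/J)_d. -/

import Mathlib

open scoped BigOperators

/-- `hcomp' w' p` is the `w'`-homogeneous component of `p` of highest `w'`-weight;
for `p ≠ 0` this is the nonzero top weighted-homogeneous component `hc'(p)`. -/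
noncomputable def hcomp' {σ : Type*} (w' : σ → ℕ) (p : MvPolynomial σ ℂ) :
    MvPolynomial σ ℂ :=
  MvPolynomial.weightedHomogeneousComponent w' (MvPolynomial.weightedTotalDegree w' p) p

namespace HcompAux

open MvPolynomial Finsupp

variable {σ : Type*} (w' : σ → ℕ)

lemma support_whc_subset {M : Type*} [AddCommMonoid M] (w : σ → M) (e : M)
    (p : MvPolynomial σ ℂ) :
    (weightedHomogeneousComponent w e p).support ⊆ p.support := by
  classical
  intro m hm
  rw [MvPolynomial.mem_support_iff, coeff_weightedHomogeneousComponent] at hm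
  rw [MvPolynomial.mem_support_iff]
  split_ifs at hm
  · exact hm
  · exact absurd rfl hm

lemma deg_le_of_support_subset {p q : MvPolynomial σ ℂ} (h : p.support ⊆ q.support) :
    weightedTotalDegree w' p ≤ weightedTotalDegree w' q :=
  Finset.sup_le fun m hm => le_weightedTotalDegree w' (h hm)

lemma whc_comm {M N : Type*} [AddCommMonoid M] [AddCommMonoid N] (w : σ → M) (v : σ → N)
    (a : M) (b : N) (p : MvPolynomial σ ℂ) :
    weightedHomogeneousComponent w a (weightedHomogeneousComponent v b p) =
      weightedHomogeneousComponent v b (weightedHomogeneousComponent w a p) := by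
  classical
  ext m
  simp only [coeff_weightedHomogeneousComponent]
  split_ifs <;> rfl

lemma isWH_whc_other {M N : Type*} [AddCommMonoid M] [AddCommMonoid N]
    {w : σ → M} {d : M} {p : MvPolynomial σ ℂ} (hp : IsWeightedHomogeneous w p d)
    (v : σ → N) (e : N) :
    IsWeightedHomogeneous w (weightedHomogeneousComponent v e p) d := by
  classical
  intro m hm
  rw [coeff_weightedHomogeneousComponent] at hm
  split_ifs at hm
  · exact hp hm
  · exact absurd rfl hm

lemma weightedTotalDegree_monomial_mul {s : σ →₀ ℕ} {a : ℂ} (ha : a ≠ 0)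
    {p : MvPolynomial σ ℂ} (hp : p ≠ 0) :
    weightedTotalDegree w' (monomial s a * p) = weight w' s + weightedTotalDegree w' p := by
  classical
  apply le_antisymm
  · apply Finset.sup_le
    intro m hm
    rw [MvPolynomial.mem_support_iff, coeff_monomial_mul'] at hm
    split_ifs at hm with h
    · have hc : coeff (m - s) p ≠ 0 := fun h0 => hm (by simp [h0])
      have hms : s + (m - s) = m := add_tsub_cancel_of_le h
      calc weight w' m = weight w' s + weight w' (m - s) := by
            rw [← map_add, hms]
        _ ≤ weight w' s + weightedTotalDegree w' p :=
            add_le_add (le_refl _) (le_weightedTotalDegree w' (MvPolynomial.mem_support_iff.mpr hc))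
    · exact absurd rfl hm
  · have hne : p.support.Nonempty := by
      rw [Finset.nonempty_iff_ne_empty, Ne, MvPolynomial.support_eq_empty]; exact hp
    obtain ⟨m, hm, hsup⟩ := Finset.exists_mem_eq_sup p.support hne (fun m => weight w' m)
    have hco : coeff (s + m) (monomial s a * p) ≠ 0 := by
      rw [coeff_monomial_mul]
      exact mul_ne_zero ha (MvPolynomial.mem_support_iff.mp hm)
    have h1 := le_weightedTotalDegree w' (MvPolynomial.mem_support_iff.mpr hco)
    have hdeg : weightedTotalDegree w' p = weight w' m := hsup
    rwa [map_add, ← hdeg] at h1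


lemma hcomp'_monomial_mul {s : σ →₀ ℕ} {a : ℂ} (ha : a ≠ 0)
    {p : MvPolynomial σ ℂ} (hp : p ≠ 0) :
    hcomp' w' (monomial s a * p) = monomial s a * hcomp' w' p := by
  classical
  rw [hcomp', hcomp', weightedTotalDegree_monomial_mul w' ha hp]
  ext m
  rw [coeff_weightedHomogeneousComponent, coeff_monomial_mul', coeff_monomial_mul']
  by_cases hs : s ≤ m
  · simp only [if_pos hs, coeff_weightedHomogeneousComponent]
    have hw : weight w' m = weight w' s + weight w' (m - s) := by
      rw [← map_add, add_tsub_cancel_of_le hs]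
    rw [hw]
    simp only [add_right_inj, mul_ite, mul_zero]
  · simp only [if_neg hs, ite_self]

lemma sub_hcomp'_eq_zero_or_lt (p : MvPolynomial σ ℂ) :
    p - hcomp' w' p = 0 ∨
      weightedTotalDegree w' (p - hcomp' w' p) < weightedTotalDegree w' p := by
  classical
  by_cases h : p - hcomp' w' p = 0
  · exact Or.inl h
  right
  have hsupp : ∀ m ∈ (p - hcomp' w' p).support, weight w' m < weightedTotalDegree w' p := by
    intro m hm
    rw [MvPolynomial.mem_support_iff] at hm
    have hco : coeff m (p - hcomp' w' p) =
        if weight w' m = weightedTotalDegree w' p then 0 else coeff m p := by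
      rw [coeff_sub, hcomp', coeff_weightedHomogeneousComponent]
      split_ifs <;> simp
    rw [hco] at hm
    split_ifs at hm with hw
    · exact absurd rfl hm
    · exact lt_of_le_of_ne (le_weightedTotalDegree w' (MvPolynomial.mem_support_iff.mpr hm)) hw
  have hne : (p - hcomp' w' p).support.Nonempty := by
    rw [Finset.nonempty_iff_ne_empty, Ne, MvPolynomial.support_eq_empty]; exact h
  obtain ⟨m, hm, hsup⟩ := Finset.exists_mem_eq_sup _ hne (fun m => weight w' m)
  have hdeg : weightedTotalDegree w' (p - hcomp' w' p) = weight w' m := hsup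
  rw [hdeg]
  exact hsupp m hm

/-- Truncation to `w'`-degrees `≤ D`. -/
noncomputable def truncLE (D : ℕ) : MvPolynomial σ ℂ →ₗ[ℂ] MvPolynomial σ ℂ :=
  ∑ e ∈ Finset.range (D + 1), weightedHomogeneousComponent w' e

lemma truncLE_of_deg_le {p : MvPolynomial σ ℂ} {D : ℕ}
    (h : weightedTotalDegree w' p ≤ D) : truncLE w' D p = p := by
  classical
  ext m
  rw [truncLE, LinearMap.sum_apply, coeff_sum]
  simp only [coeff_weightedHomogeneousComponent]
  rw [Finset.sum_ite_eq]
  by_cases h0 : coeff m p = 0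
  · simp [h0]
  · rw [if_pos]
    exact Finset.mem_range.mpr (Nat.lt_succ_of_le
      (le_trans (le_weightedTotalDegree w' (MvPolynomial.mem_support_iff.mpr h0)) h))

lemma truncLE_of_homogeneous {p : MvPolynomial σ ℂ} {e : ℕ}
    (hp : IsWeightedHomogeneous w' p e) (D : ℕ) :
    truncLE w' D p = if e ≤ D then p else 0 := by
  classical
  rw [truncLE, LinearMap.sum_apply]
  have hterm : ∀ a ∈ Finset.range (D + 1), weightedHomogeneousComponent w' a p
      = if a = e then p else 0 := by
    intro a _
    split_ifs with h
    · subst h; exact hp.weightedHomogeneousComponent_same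
    · exact hp.weightedHomogeneousComponent_ne a h
  rw [Finset.sum_congr rfl hterm, Finset.sum_ite_eq']
  simp [Nat.lt_succ_iff]

end HcompAux

/-- The image in `S ⧸ J` of the space of `w`-homogeneous polynomials of weight `d`. -/
noncomputable def gradedPiece {σ : Type*} {n : ℕ} (w : σ → Fin n → ℤ)
    (J : Ideal (MvPolynomial σ ℂ)) (d : Fin n → ℤ) :
    Submodule ℂ (MvPolynomial σ ℂ ⧸ J) :=
  (MvPolynomial.weightedHomogeneousSubmodule ℂ w d).map
    (Ideal.Quotient.mkₐ ℂ J).toLinearMap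

section
open MvPolynomial HcompAux
set_option maxHeartbeats 1000000 in
/-- in the weighted-grading setup, suppose `J = (g_i)_{i ∈ Λ}` is an
ideal generated by a family of elements and homogeneous with respect to the
`ℤⁿ`-grading, and let `J' = (hc'(g_i))_{i ∈ Λ}`.  Then for every `d ∈ ℤⁿ` for which
`(S/J)_d` is finite-dimensional, one has `dim (S/J')_d ≥ dim (S/J)_d`. -/
theorem dim_quotient_hc_generators_ge (σ : Type*) (n : ℕ) (w : σ → Fin n → ℤ)
    (w' : σ → ℕ) (Λ : Type*) (g : Λ → MvPolynomial σ ℂ)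
    (hJ : ∀ p ∈ Ideal.span (Set.range g), ∀ d : Fin n → ℤ,
      MvPolynomial.weightedHomogeneousComponent w d p ∈ Ideal.span (Set.range g))
    (d : Fin n → ℤ)
    (hfin : FiniteDimensional ℂ (gradedPiece w (Ideal.span (Set.range g)) d)) :
    Module.rank ℂ (gradedPiece w (Ideal.span (Set.range g)) d) ≤
      Module.rank ℂ (gradedPiece w (Ideal.span (Set.range fun i => hcomp' w' (g i))) d) := by
  classical
  set J : Ideal (MvPolynomial σ ℂ) := Ideal.span (Set.range g) with hJdef
  set J' : Ideal (MvPolynomial σ ℂ) := Ideal.span (Set.range fun i => hcomp' w' (g i))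
    with hJ'def
  set V := MvPolynomial.weightedHomogeneousSubmodule ℂ w d with hVdef
  set U : Submodule ℂ (MvPolynomial σ ℂ) := Submodule.restrictScalars ℂ J ⊓ V with hUdef
  set W₀ : Submodule ℂ (MvPolynomial σ ℂ) :=
    Submodule.span ℂ ((fun u => hcomp' w' u) '' (U : Set (MvPolynomial σ ℂ))) with hW0def
  set W : Submodule ℂ (MvPolynomial σ ℂ) :=
    Submodule.span ℂ ((fun u => hcomp' w' u) '' (J : Set (MvPolynomial σ ℂ))) with hWdef
  -- multiplication stability of W
  have hmulW : ∀ (c f : MvPolynomial σ ℂ), f ∈ J → c * hcomp' w' f ∈ W := by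
    intro c f hf
    by_cases hf0 : f = 0
    · have : hcomp' w' f = 0 := by simp [hf0, hcomp']
      rw [this, mul_zero]; exact W.zero_mem
    · rw [← MvPolynomial.support_sum_monomial_coeff c, Finset.sum_mul]
      apply Submodule.sum_mem
      intro s hs
      rw [← hcomp'_monomial_mul w' (MvPolynomial.mem_support_iff.mp hs) hf0]
      exact Submodule.subset_span ⟨monomial s (coeff s c) * f, J.mul_mem_left _ hf, rfl⟩
  -- J' ⊆ W
  have hJ'W : ∀ q ∈ J', q ∈ W := by
    intro q hq
    have key : ∀ c : MvPolynomial σ ℂ, c * q ∈ W := by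
      refine Submodule.span_induction
        (p := fun x _ => ∀ c : MvPolynomial σ ℂ, c * x ∈ W) ?_ ?_ ?_ ?_ hq
      · rintro x ⟨i, rfl⟩ c
        exact hmulW c (g i) (Ideal.subset_span ⟨i, rfl⟩)
      · intro c; rw [mul_zero]; exact W.zero_mem
      · intro x y _ _ hcx hcy c; rw [mul_add]; exact W.add_mem (hcx c) (hcy c)
      · intro a x _ hcx c
        rw [smul_eq_mul, ← mul_assoc]
        exact hcx (c * a)
    simpa using key 1
  -- homogeneous elements of W of weight d lie in W₀
  have hWV : ∀ q ∈ W, q ∈ V → q ∈ W₀ := by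
    have hmap : ∀ x ∈ W, weightedHomogeneousComponent w d x ∈ W₀ := by
      intro x hx
      refine Submodule.span_induction
        (p := fun x _ => weightedHomogeneousComponent w d x ∈ W₀) ?_ ?_ ?_ ?_ hx
      · rintro y ⟨f, hf, rfl⟩
        have hcomm : weightedHomogeneousComponent w d (hcomp' w' f) =
            weightedHomogeneousComponent w' (weightedTotalDegree w' f)
              (weightedHomogeneousComponent w d f) := whc_comm w w' d _ f
        rw [hcomm]
        set h := weightedHomogeneousComponent w d f with hhdef
        have hhJ : h ∈ J := hJ f hf d
        have hhV : h ∈ V := weightedHomogeneousComponent_mem w f d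
        by_cases hD : weightedTotalDegree w' h = weightedTotalDegree w' f
        · rw [← hD]
          exact Submodule.subset_span ⟨h, ⟨hhJ, hhV⟩, rfl⟩
        · have hlt : weightedTotalDegree w' h < weightedTotalDegree w' f :=
            lt_of_le_of_ne (deg_le_of_support_subset w' (support_whc_subset w d f)) hD
          rw [weightedHomogeneousComponent_eq_zero _ h hlt]
          exact W₀.zero_mem
      · simp only [map_zero]; exact W₀.zero_mem
      · intro x y _ _ hx hy; simp only [map_add]; exact W₀.add_mem hx hy
      · intro a x _ hx; simp only [map_smul]; exact W₀.smul_mem a hx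
    intro q hqW hqV
    have := hmap q hqW
    rwa [((mem_weightedHomogeneousSubmodule ℂ w d q).mp hqV).weightedHomogeneousComponent_same]
      at this
  have hJ'V : ∀ q, q ∈ J' → q ∈ V → q ∈ W₀ := fun q h1 h2 => hWV q (hJ'W q h1) h2
  -- quotient maps
  set mkJ : MvPolynomial σ ℂ →ₗ[ℂ] MvPolynomial σ ℂ ⧸ (J : Ideal (MvPolynomial σ ℂ)) :=
    (Ideal.Quotient.mkₐ ℂ J).toLinearMap with hmkJ
  set mkJ' : MvPolynomial σ ℂ →ₗ[ℂ] MvPolynomial σ ℂ ⧸ (J' : Ideal (MvPolynomial σ ℂ)) :=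
    (Ideal.Quotient.mkₐ ℂ J').toLinearMap with hmkJ'
  -- homogeneous spanning set of the J' graded piece
  set 𝒮 : Set (MvPolynomial σ ℂ ⧸ (J' : Ideal (MvPolynomial σ ℂ))) :=
    mkJ' '' {v | v ∈ V ∧ ∃ e, IsWeightedHomogeneous w' v e} with h𝒮def
  have hspan𝒮 : Submodule.span ℂ 𝒮 = gradedPiece w J' d := by
    apply le_antisymm
    · rw [Submodule.span_le]
      rintro x ⟨v, ⟨hv, -⟩, rfl⟩
      exact ⟨v, hv, rfl⟩
    · rintro x ⟨v, hv, rfl⟩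
      show mkJ' v ∈ Submodule.span ℂ 𝒮
      rw [← MvPolynomial.sum_weightedHomogeneousComponent w' v,
        finsum_eq_sum _ (weightedHomogeneousComponent_finsupp v), map_sum]
      apply Submodule.sum_mem
      intro e _
      apply Submodule.subset_span
      exact ⟨weightedHomogeneousComponent w' e v,
        ⟨isWH_whc_other ((mem_weightedHomogeneousSubmodule ℂ w d v).mp hv) w' e,
          ⟨e, weightedHomogeneousComponent_isWeightedHomogeneous e v⟩⟩, rfl⟩
  obtain ⟨t, hts, htspan, htind⟩ := exists_linearIndependent ℂ 𝒮
  -- choose homogeneous lifts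
  have hmem : ∀ x : t, (x : MvPolynomial σ ℂ ⧸ (J' : Ideal (MvPolynomial σ ℂ))) ∈ 𝒮 :=
    fun x => hts x.2
  choose ℓ hℓprop hℓmk using fun x : t => hmem x
  set L : Set (MvPolynomial σ ℂ) := Set.range ℓ with hLdef
  set Q : Submodule ℂ (MvPolynomial σ ℂ) := Submodule.span ℂ L with hQdef
  have hQV : Q ≤ V := by
    rw [hQdef, Submodule.span_le]
    rintro x ⟨i, rfl⟩
    exact (hℓprop i).1
  -- step 5
  have hstep5 : ∀ v ∈ V, ∃ q ∈ Q, v - q ∈ W₀ := by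
    intro v hv
    have h1 : mkJ' v ∈ Submodule.span ℂ t := by
      rw [htspan, hspan𝒮]; exact ⟨v, hv, rfl⟩
    have h2 : Submodule.span ℂ t ≤ Submodule.map mkJ' Q := by
      rw [Submodule.span_le]
      intro x hx
      rw [hQdef, Submodule.map_span]
      exact Submodule.subset_span ⟨ℓ ⟨x, hx⟩, ⟨⟨x, hx⟩, rfl⟩, hℓmk ⟨x, hx⟩⟩
    obtain ⟨q, hqQ, hqeq⟩ := h2 h1
    refine ⟨q, hqQ, ?_⟩
    have hkermem : v - q ∈ J' := by
      have : mkJ' (v - q) = 0 := by rw [map_sub, hqeq, sub_self]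
      rwa [hmkJ', AlgHom.toLinearMap_apply, Ideal.Quotient.mkₐ_eq_mk,
        Ideal.Quotient.eq_zero_iff_mem] at this
    exact hJ'V _ hkermem (V.sub_mem hv (hQV hqQ))
  -- truncation stability of Q
  have htruncQ : ∀ (D : ℕ), ∀ x ∈ Q, truncLE w' D x ∈ Q := by
    intro D x hx
    refine Submodule.span_induction (p := fun x _ => truncLE w' D x ∈ Q) ?_ ?_ ?_ ?_ hx
    · rintro y ⟨i, rfl⟩
      obtain ⟨e, he⟩ := (hℓprop i).2
      rw [truncLE_of_homogeneous w' he D]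
      split_ifs
      · exact Submodule.subset_span ⟨i, rfl⟩
      · exact Q.zero_mem
    · simp only [map_zero]; exact Q.zero_mem
    · intro a b _ _ ha hb; simp only [map_add]; exact Q.add_mem ha hb
    · intro a x _ hx; simp only [map_smul]; exact Q.smul_mem a hx
  -- main induction
  have hmain : ∀ D : ℕ, ∀ v ∈ V, weightedTotalDegree w' v ≤ D → v ∈ Q ⊔ U := by
    intro D
    induction D using Nat.strong_induction_on with
    | _ D IH =>
      intro v hv hdeg
      obtain ⟨q, hqQ, hvW⟩ := hstep5 v hv
      have hsplit : v = truncLE w' D q + truncLE w' D (v - q) := by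
        rw [← map_add, add_sub_cancel, truncLE_of_deg_le w' hdeg]
      have h2 : truncLE w' D (v - q) ∈ Q ⊔ U := by
        refine Submodule.span_induction (p := fun x _ => truncLE w' D x ∈ Q ⊔ U)
          ?_ ?_ ?_ ?_ hvW
        · rintro y ⟨u, hu, rfl⟩
          have hhom : IsWeightedHomogeneous w' (hcomp' w' u) (weightedTotalDegree w' u) :=
            weightedHomogeneousComponent_isWeightedHomogeneous
              (w := w') (weightedTotalDegree w' u) u
          show truncLE w' D (hcomp' w' u) ∈ Q ⊔ U
          rw [truncLE_of_homogeneous w' hhom D]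
          split_ifs with hDu
          · rcases sub_hcomp'_eq_zero_or_lt w' u with h0 | hlt
            · have heq : hcomp' w' u = u := by
                rw [sub_eq_zero] at h0; exact h0.symm
              rw [heq]
              exact Submodule.mem_sup_right hu
            · have hlowV : u - hcomp' w' u ∈ V := by
                refine V.sub_mem hu.2 ?_
                exact (mem_weightedHomogeneousSubmodule ℂ w d _).mpr
                  (isWH_whc_other ((mem_weightedHomogeneousSubmodule ℂ w d u).mp hu.2) w' _)
              have hlow : u - hcomp' w' u ∈ Q ⊔ U :=
                IH _ (lt_of_lt_of_le hlt hDu) _ hlowV le_rfl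
              rw [show hcomp' w' u = u - (u - hcomp' w' u) from
                (sub_sub_cancel u (hcomp' w' u)).symm]
              exact Submodule.sub_mem _ (Submodule.mem_sup_right hu) hlow
          · exact Submodule.zero_mem _
        · simp only [map_zero]; exact Submodule.zero_mem _
        · intro a b _ _ ha hb; simp only [map_add]; exact Submodule.add_mem _ ha hb
        · intro a x _ hx; simp only [map_smul]; exact Submodule.smul_mem _ a hx
      rw [hsplit]
      exact Submodule.add_mem _ (Submodule.mem_sup_left (htruncQ D q hqQ)) h2
  have hVQU : V ≤ Q ⊔ U := fun v hv => hmain (weightedTotalDegree w' v) v hv le_rfl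
  -- conclude
  have hUbot : Submodule.map mkJ U = ⊥ := by
    rw [Submodule.eq_bot_iff]
    rintro x ⟨u, hu, rfl⟩
    rw [hmkJ, AlgHom.toLinearMap_apply, Ideal.Quotient.mkₐ_eq_mk,
      Ideal.Quotient.eq_zero_iff_mem]
    exact hu.1
  have hle : gradedPiece w J d ≤ Submodule.map mkJ Q := by
    calc gradedPiece w J d = Submodule.map mkJ V := rfl
      _ ≤ Submodule.map mkJ (Q ⊔ U) := Submodule.map_mono hVQU
      _ = Submodule.map mkJ Q ⊔ Submodule.map mkJ U := Submodule.map_sup _ _ _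
      _ = Submodule.map mkJ Q := by rw [hUbot, sup_bot_eq]
  calc Module.rank ℂ (gradedPiece w J d)
      ≤ Module.rank ℂ (Submodule.map mkJ Q) := Submodule.rank_mono hle
    _ ≤ Module.rank ℂ Q := rank_map_le mkJ Q
    _ ≤ Cardinal.mk L := rank_span_le L
    _ ≤ Cardinal.mk t := Cardinal.mk_range_le
    _ = Module.rank ℂ (Submodule.span ℂ t) := (rank_span_set htind).symm
    _ = Module.rank ℂ (gradedPiece w J' d) := by rw [htspan, hspan𝒮]

end
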